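/- Suppose SSet is equipped with a model category structure in which the cofibrations are exactly the monomorphisms. Then for every n ≥ 0, the pushout-product ({0} ↪ J) □ (∂Δ[n] ↪ Δ[n]) is a trivial cofibration (a cofibration which is also a weak equivalence) in this model structure. -/

import Mathlib

open CategoryTheory Simplicial Opposite Limits

namespace Paper

/-! ## The simplicial set `J`, nerve of the free-living isomorphism -/

/-- The simplicial set `J`, the nerve of the free-living isomorphism `𝕀`:
its `n`-simplices are the tuples `{0,1}^(n+1)` (recorded as `Bool`-valued functions,
`false` being the vertex `0` and `true` the vertex `1`), with all simplicial
operators acting by reindexing. -/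
def J : SSet.{0} where
  obj m := Fin (m.unop.len + 1) → Bool
  map f := TypeCat.ofHom (fun a => a ∘ f.unop.toOrderHom)
  map_id _ := rfl
  map_comp _ _ := rfl

/-- The two vertices `0, 1 : Δ[0] ⟶ J` of `J`; `ptJ false` is the vertex `0` and
`ptJ true` is the vertex `1`. -/
def ptJ (b : Bool) : Δ[0] ⟶ J where
  app _ := TypeCat.ofHom (fun _ => fun _ => b)
  naturality _ _ _ := rfl

/-- The boundary `∂J = {0} ∪ {1}` of `J` (two discrete points). -/
def bJ : SSet.{0} where
  obj _ := Bool
  map _ := TypeCat.ofHom (fun b => b)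
  map_id _ := rfl
  map_comp _ _ := rfl

/-- The inclusion `∂J ↪ J`. -/
def bJIncl : bJ ⟶ J where
  app _ := TypeCat.ofHom (fun b => fun _ => b)
  naturality _ _ _ := rfl

/-! ## Binary products and pushout-products -/

/-- The (pointwise) product of two simplicial sets. -/
def sprod (X Y : SSet.{0}) : SSet.{0} where
  obj m := X.obj m × Y.obj m
  map f := TypeCat.ofHom (fun (p : X.obj _ × Y.obj _) => (X.map f p.1, Y.map f p.2))
  map_id m := by
    ext p
    · exact FunctorToTypes.map_id_apply X p.1
    · exact FunctorToTypes.map_id_apply Y p.2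
  map_comp f g := by
    ext p
    · exact FunctorToTypes.map_comp_apply X f g p.1
    · exact FunctorToTypes.map_comp_apply Y f g p.2

/-- The product of two morphisms of simplicial sets. -/
def sprodMap {X X' Y Y' : SSet.{0}} (f : X ⟶ X') (g : Y ⟶ Y') : sprod X Y ⟶ sprod X' Y' where
  app m := TypeCat.ofHom (fun (p : X.obj m × Y.obj m) => (f.app m p.1, g.app m p.2))
  naturality m m' φ := by
    ext p
    refine Prod.ext ?_ ?_
    · exact NatTrans.naturality_apply f φ p.1
    · exact NatTrans.naturality_apply g φ p.2

/-- The pushout-product `f □ g : (A × Z) ∪ (B × W) ⟶ B × Z` of `f : A ⟶ B` and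
`g : W ⟶ Z`, the domain being presented as the pushout `(A × Z) ∪_{A × W} (B × W)`. -/
noncomputable def pp {A B W Z : SSet.{0}} (f : A ⟶ B) (g : W ⟶ Z) :
    pushout (sprodMap (𝟙 A) g) (sprodMap f (𝟙 W)) ⟶ sprod B Z :=
  pushout.desc (sprodMap f (𝟙 Z)) (sprodMap (𝟙 B) g) rfl

/-! ## Saturated classes of morphisms -/

/-- A class of morphisms is stable under retracts if, whenever `f` is a retract of `g`
in the arrow category, membership of `g` implies membership of `f`. -/
def StableUnderRetracts (T : MorphismProperty SSet.{0}) : Prop :=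
  ∀ ⦃X Y X' Y' : SSet.{0}⦄ (f : X ⟶ Y) (g : X' ⟶ Y')
    (i : Arrow.mk f ⟶ Arrow.mk g) (r : Arrow.mk g ⟶ Arrow.mk f),
    i ≫ r = 𝟙 _ → T g → T f

/-- The inclusion functor `Set.Iio i ⥤ ι`. -/
def iioFunctor {ι : Type} [Preorder ι] (i : ι) : Set.Iio i ⥤ ι :=
  Monotone.functor (f := Subtype.val) (fun _ _ h => h)

/-- The cocone on the restriction of `F : ι ⥤ SSet` to `Set.Iio i` with apex `F.obj i`. -/
def restrictionCocone {ι : Type} [Preorder ι] (F : ι ⥤ SSet.{0}) (i : ι) :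
    Cocone (iioFunctor i ⋙ F) where
  pt := F.obj i
  ι :=
    { app := fun j => F.map (homOfLE j.2.le)
      naturality := fun j k h => by
        dsimp [iioFunctor]
        rw [← F.map_comp, Category.comp_id]
        congr 1 }

/-- A class of morphisms is stable under transfinite composition if, for every
well-ordered type `ι` and every functor `F : ι ⥤ SSet` which is continuous at limit
stages and whose successor maps `F.obj i ⟶ F.obj (i+1)` all belong to the class, and
every colimit cocone `c` on `F`, the transfinite composite `F.obj ⊥ ⟶ c.pt` belongs to
the class. -/
def StableUnderTransfiniteComposition (T : MorphismProperty SSet.{0}) : Prop :=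
  ∀ (ι : Type) [LinearOrder ι] [SuccOrder ι] [OrderBot ι] [WellFoundedLT ι]
    (F : ι ⥤ SSet.{0}),
    (∀ i : ι, ¬IsMax i → T (F.map (homOfLE (Order.le_succ i)))) →
    (∀ i : ι, Order.IsSuccLimit i → Nonempty (IsColimit (restrictionCocone F i))) →
    ∀ (c : Cocone F), IsColimit c → T (c.ι.app ⊥)

/-- A class of morphisms of simplicial sets is saturated if it is closed under
isomorphisms, pushouts, transfinite compositions, and retracts. -/
structure IsSaturated (T : MorphismProperty SSet.{0}) : Prop where
  respectsIso : T.RespectsIso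
  stableUnderCobaseChange : T.IsStableUnderCobaseChange
  stableUnderRetracts : StableUnderRetracts T
  stableUnderTransfiniteComposition : StableUnderTransfiniteComposition T

/-- The saturated closure of a class of morphisms: the smallest saturated class
containing it. -/
def satClosure (S : MorphismProperty SSet.{0}) : MorphismProperty SSet.{0} :=
  fun _ _ f => ∀ T : MorphismProperty SSet.{0}, IsSaturated T → S ≤ T → T f

/-! ## Subcomplexes -/

/-- A subcomplex of a simplicial set. -/
structure Sub (X : SSet.{0}) where
  carrier : ∀ m, Set (X.obj m)
  map_mem : ∀ ⦃m m' : SimplexCategoryᵒᵖ⦄ (f : m ⟶ m') ⦃σ : X.obj m⦄,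
    σ ∈ carrier m → X.map f σ ∈ carrier m'

/-- The simplicial set underlying a subcomplex. -/
def Sub.toSSet {X : SSet.{0}} (S : Sub X) : SSet.{0} where
  obj m := S.carrier m
  map f := TypeCat.ofHom (fun σ => ⟨X.map f σ.1, S.map_mem f σ.2⟩)
  map_id m := by
    ext σ
    exact FunctorToTypes.map_id_apply X σ.1
  map_comp f g := by
    ext σ
    exact FunctorToTypes.map_comp_apply X f g σ.1

/-- The inclusion of a subcomplex. -/
def Sub.ι {X : SSet.{0}} (S : Sub X) : S.toSSet ⟶ X where
  app _ := TypeCat.ofHom (fun σ => σ.1)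
  naturality _ _ _ := rfl

/-- Containment of subcomplexes. -/
def Sub.Le {X : SSet.{0}} (S T : Sub X) : Prop := ∀ m, S.carrier m ⊆ T.carrier m

/-- The inclusion map associated to a containment of subcomplexes. -/
def Sub.homOfLe {X : SSet.{0}} {S T : Sub X} (h : S.Le T) : S.toSSet ⟶ T.toSSet where
  app m := TypeCat.ofHom (fun σ => ⟨σ.1, h m σ.2⟩)
  naturality _ _ _ := rfl

/-- The union of two subcomplexes. -/
def Sub.union {X : SSet.{0}} (S T : Sub X) : Sub X where
  carrier m := S.carrier m ∪ T.carrier m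
  map_mem _ _ f _ h := h.imp (fun hs => S.map_mem f hs) (fun ht => T.map_mem f ht)

/-- The intersection of two subcomplexes. -/
def Sub.inter {X : SSet.{0}} (S T : Sub X) : Sub X where
  carrier m := S.carrier m ∩ T.carrier m
  map_mem _ _ f _ h := ⟨S.map_mem f h.1, T.map_mem f h.2⟩

/-- A subcomplex `S` of `X`, viewed as a subcomplex of (the simplicial set underlying)
another subcomplex `T` of `X`. -/
def Sub.restrict {X : SSet.{0}} (T S : Sub X) : Sub T.toSSet where
  carrier m := setOf (fun σ : T.carrier m => σ.1 ∈ S.carrier m)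
  map_mem _ _ f _ h := S.map_mem f h

/-- The (dimension zero) object of `SimplexCategoryᵒᵖ` indexing vertices. -/
abbrev V0 : SimplexCategoryᵒᵖ := Opposite.op (SimplexCategory.mk 0)

/-- The full subcomplex of `X` on a set `ν` of vertices: the simplices all of whose
vertices lie in `ν`. -/
def fullSub (X : SSet.{0}) (ν : Set (X.obj V0)) : Sub X where
  carrier m := {σ | ∀ g : SimplexCategory.mk 0 ⟶ m.unop, X.map g.op σ ∈ ν}
  map_mem := by
    intro m m' f σ hσ g
    rw [← FunctorToTypes.map_comp_apply]
    exact hσ (g ≫ f.unop)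

/-! ## Widenings and widened inclusions -/

/-- The widening `W_ν(X)` of `X` at a set `ν` of vertices: the full subcomplex of
`J × X` on the vertex set `({0} × X₀) ∪ ({1} × ν)`. -/
def wideSub (X : SSet.{0}) (ν : Set (X.obj V0)) : Sub (sprod J X) :=
  fullSub (sprod J X) (setOf fun p : J.obj V0 × X.obj V0 => p.1 0 = true → p.2 ∈ ν)

/-- The subcomplex `{0} × X` of `J × X` (the full subcomplex on the vertices
`{0} × X₀`). -/
def zeroSlice (X : SSet.{0}) : Sub (sprod J X) :=
  fullSub (sprod J X) (setOf fun p : J.obj V0 × X.obj V0 => p.1 0 = false)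

/-- For `A` a subcomplex of `Y`, the subcomplex `J × A` of `J × Y`. -/
def Sub.prodJ {Y : SSet.{0}} (A : Sub Y) : Sub (sprod J Y) where
  carrier m := setOf (fun p : J.obj m × Y.obj m => p.2 ∈ A.carrier m)
  map_mem _ _ f _ h := A.map_mem f h

/-- Given a subcomplex (inclusion) `A = X ⊆ Y` and a set `ν` of vertices of `Y`, the
subcomplex `({0} × Y) ∪ W_{ν ∩ X₀}(X)` of `J × Y`: the domain of the inclusion
`X ↪ Y` widened at `ν`. -/
def widenedSub (Y : SSet.{0}) (A : Sub Y) (ν : Set (Y.obj V0)) : Sub (sprod J Y) :=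
  (zeroSlice Y).union ((wideSub Y (ν ∩ A.carrier V0)).inter A.prodJ)

lemma zeroSlice_le_wideSub (Y : SSet.{0}) (ν : Set (Y.obj V0)) :
    (zeroSlice Y).Le (wideSub Y ν) := by
  intro m σ hσ g h
  exact absurd (hσ g) (fun h' => by change _ = false at h'; exact Bool.noConfusion (h.symm.trans h'))

lemma wideSub_mono (Y : SSet.{0}) {ν ν' : Set (Y.obj V0)} (h : ν ⊆ ν') :
    (wideSub Y ν).Le (wideSub Y ν') :=
  fun _ σ hσ g ht => h (hσ g ht)

lemma widenedSub_le (Y : SSet.{0}) (A : Sub Y) (ν : Set (Y.obj V0)) :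
    (widenedSub Y A ν).Le (wideSub Y ν) := by
  refine fun m σ hσ => Or.elim hσ (fun h => ?_) (fun h => ?_)
  · exact zeroSlice_le_wideSub Y ν m h
  · exact wideSub_mono Y Set.inter_subset_left m h.1

/-- The inclusion `X ↪ Y` widened at `ν`: the inclusion
`({0} × Y) ∪ W_{ν ∩ X₀}(X) ↪ W_ν(Y)`. -/
def widenedIncl (Y : SSet.{0}) (A : Sub Y) (ν : Set (Y.obj V0)) :
    (widenedSub Y A ν).toSSet ⟶ (wideSub Y ν).toSSet :=
  Sub.homOfLe (widenedSub_le Y A ν)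

/-- `Wide`: the class of all widened inclusions. -/
def Wide : MorphismProperty SSet.{0} := fun _ _ h =>
  ∃ (Y : SSet.{0}) (A : Sub Y) (ν : Set (Y.obj V0)),
    Arrow.mk h = Arrow.mk (widenedIncl Y A ν)

/-- `Wide^(1)`: the class of inclusions widened at a single vertex. -/
def Wide1 : MorphismProperty SSet.{0} := fun _ _ h =>
  ∃ (Y : SSet.{0}) (A : Sub Y) (v : Y.obj V0),
    Arrow.mk h = Arrow.mk (widenedIncl Y A {v})

/-! ## Narrow vertices -/

/-- A vertex `v` of `Y` is narrow if every simplex of `Y` has at most one vertex equal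
to `v`. -/
def Narrow (Y : SSet.{0}) (v : Y.obj V0) : Prop :=
  ∀ ⦃m : SimplexCategoryᵒᵖ⦄ (σ : Y.obj m) (g g' : SimplexCategory.mk 0 ⟶ m.unop),
    Y.map g.op σ = v → Y.map g'.op σ = v → g = g'

/-- `Wide_nar`: the class of inclusions widened at a narrow set of vertices. -/
def WideNar : MorphismProperty SSet.{0} := fun _ _ h =>
  ∃ (Y : SSet.{0}) (A : Sub Y) (ν : Set (Y.obj V0)),
    (∀ v ∈ ν, Narrow Y v) ∧ Arrow.mk h = Arrow.mk (widenedIncl Y A ν)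

/-- `Wide_nar^(1)`: the class of inclusions widened at a single narrow vertex. -/
def WideNar1 : MorphismProperty SSet.{0} := fun _ _ h =>
  ∃ (Y : SSet.{0}) (A : Sub Y) (v : Y.obj V0),
    Narrow Y v ∧ Arrow.mk h = Arrow.mk (widenedIncl Y A {v})

/-! ## Standard simplices, boundaries, skeleta, iso-horns -/

/-- The unique map to the terminal simplicial set `Δ[0]`. -/
def toPt (X : SSet.{0}) : X ⟶ Δ[0] where
  app m := TypeCat.ofHom (fun _ => SSet.stdSimplex.const 0 0 m)
  naturality m m' f := by
    ext x
    apply SSet.stdSimplex.objEquiv.injective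
    apply SimplexCategory.Hom.ext
    apply OrderHom.ext
    funext j
    exact Subsingleton.elim (α := Fin 1) _ _

/-- The `i`-th vertex of the standard simplex `Δ[n]`. -/
def vrt (n : ℕ) (i : Fin (n + 1)) : Δ[n].obj V0 :=
  SSet.stdSimplex.const n i V0

/-- The boundary `∂Δ[n]`, as a subcomplex of `Δ[n]`: the simplices which are not
surjective as monotone maps. -/
def bSub (n : ℕ) : Sub Δ[n] where
  carrier m := {σ | ¬Function.Surjective (SSet.stdSimplex.asOrderHom σ)}
  map_mem _ _ f σ hσ h := hσ (Function.Surjective.of_comp h)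

/-- The `k`-skeleton of `Y`, as a subcomplex: the simplices which factor through some
simplex of dimension at most `k`. -/
def skSub (Y : SSet.{0}) (k : ℕ) : Sub Y where
  carrier m := {σ | ∃ (j : ℕ) (_ : j ≤ k) (f : m.unop ⟶ SimplexCategory.mk j)
    (τ : Y.obj (Opposite.op (SimplexCategory.mk j))), Y.map f.op τ = σ}
  map_mem := by
    rintro m m' φ σ ⟨j, hj, f, τ, rfl⟩
    exact ⟨j, hj, φ.unop ≫ f, τ, by rw [← FunctorToTypes.map_comp_apply]; rfl⟩

/-- A `k`-simplex is nondegenerate if it admits no factorization through a simplex of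
strictly smaller dimension. -/
def Nondegenerate (Y : SSet.{0}) {k : ℕ} (σ : Y.obj (Opposite.op (SimplexCategory.mk k))) :
    Prop :=
  ∀ (j : ℕ) (f : SimplexCategory.mk k ⟶ SimplexCategory.mk j)
    (τ : Y.obj (Opposite.op (SimplexCategory.mk j))), Y.map f.op τ = σ → k ≤ j

/-- The iso-horn inclusion `𝕍_i[m+1] ↪ ∇̄_i[m+1]`: the boundary inclusion
`∂Δ[m] ↪ Δ[m]` widened at the single vertex `i`, i.e. the inclusion
`({0} × Δ[m]) ∪ W_i(∂Δ[m]) ↪ W_i(Δ[m])` of the iso-horn into the isoplex. -/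
def isoHornIncl (m : ℕ) (i : Fin (m + 1)) :
    (widenedSub Δ[m] (bSub m) {vrt m i}).toSSet ⟶ (wideSub Δ[m] {vrt m i}).toSSet :=
  widenedIncl Δ[m] (bSub m) {vrt m i}

/-- `IsoHorn`: the class of all iso-horn inclusions. -/
def IsoHorn : MorphismProperty SSet.{0} := fun _ _ h =>
  ∃ (m : ℕ) (i : Fin (m + 1)), Arrow.mk h = Arrow.mk (isoHornIncl m i)

/-! ## The classes `({0} ↪ J) □ Bdry` and `({0} ↪ J) □ Mono` -/

/-- The class `({0} ↪ J) □ Bdry` of pushout-products of the vertex `0 : Δ[0] ⟶ J`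
with the boundary inclusions `∂Δ[n] ↪ Δ[n]`. -/
def ppJ0Bdry : MorphismProperty SSet.{0} := fun _ _ h =>
  ∃ n : ℕ, Arrow.mk h = Arrow.mk (pp (ptJ false) (SSet.boundary.{0} n).ι)

/-- The class `({0} ↪ J) □ Mono` of pushout-products of the vertex `0 : Δ[0] ⟶ J`
with all monomorphisms of simplicial sets. -/
def ppJ0Mono : MorphismProperty SSet.{0} := fun _ _ h =>
  ∃ (W Z : SSet.{0}) (g : W ⟶ Z), Mono g ∧ Arrow.mk h = Arrow.mk (pp (ptJ false) g)


/-- A model category structure on `SSet`: classes of weak equivalences, cofibrations and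
fibrations satisfying the model category axioms (two-out-of-three, retract stability,
lifting, and factorization). -/
structure ModelStructure where
  /-- the weak equivalences -/
  weq : MorphismProperty SSet.{0}
  /-- the cofibrations -/
  cof : MorphismProperty SSet.{0}
  /-- the fibrations -/
  fib : MorphismProperty SSet.{0}
  weq_comp : ∀ ⦃X Y Z : SSet.{0}⦄ (f : X ⟶ Y) (g : Y ⟶ Z), weq f → weq g → weq (f ≫ g)
  weq_of_comp_left : ∀ ⦃X Y Z : SSet.{0}⦄ (f : X ⟶ Y) (g : Y ⟶ Z),
    weq f → weq (f ≫ g) → weq g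
  weq_of_comp_right : ∀ ⦃X Y Z : SSet.{0}⦄ (f : X ⟶ Y) (g : Y ⟶ Z),
    weq g → weq (f ≫ g) → weq f
  weq_retract : StableUnderRetracts weq
  cof_retract : StableUnderRetracts cof
  fib_retract : StableUnderRetracts fib
  lift_trivCof_fib : ∀ ⦃A B X Y : SSet.{0}⦄ (i : A ⟶ B) (p : X ⟶ Y),
    cof i → weq i → fib p → HasLiftingProperty i p
  lift_cof_trivFib : ∀ ⦃A B X Y : SSet.{0}⦄ (i : A ⟶ B) (p : X ⟶ Y),
    cof i → fib p → weq p → HasLiftingProperty i p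
  factor_cof_trivFib : ∀ ⦃X Y : SSet.{0}⦄ (f : X ⟶ Y),
    ∃ (Z : SSet.{0}) (i : X ⟶ Z) (p : Z ⟶ Y), cof i ∧ fib p ∧ weq p ∧ i ≫ p = f
  factor_trivCof_fib : ∀ ⦃X Y : SSet.{0}⦄ (f : X ⟶ Y),
    ∃ (Z : SSet.{0}) (i : X ⟶ Z) (p : Z ⟶ Y), cof i ∧ weq i ∧ fib p ∧ i ≫ p = f

/-! ## Auxiliary lemmas for Statement 4 -/

section Aux

/-- Identities are weak equivalences. -/
lemma ModelStructure.weq_id (M : ModelStructure) (X : SSet.{0}) : M.weq (𝟙 X) := by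
  obtain ⟨Z, i, p, _, hiw, _, hip⟩ := M.factor_trivCof_fib (𝟙 X)
  refine M.weq_retract (𝟙 X) i (Arrow.homMk (u := 𝟙 X) (v := i) (by simp))
    (Arrow.homMk (u := 𝟙 X) (v := p) (by simp [hip])) ?_ hiw
  ext
  · simp
  · simp [hip]

/-- Isomorphisms are weak equivalences. -/
lemma ModelStructure.weq_of_iso (M : ModelStructure) {X Y : SSet.{0}} (f : X ⟶ Y) [IsIso f] :
    M.weq f := by
  refine M.weq_retract f (𝟙 X) (Arrow.homMk (u := 𝟙 X) (v := inv f) (by simp))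
    (Arrow.homMk (u := 𝟙 X) (v := f) (by simp)) ?_ (M.weq_id X)
  ext
  · simp
  · simp

/-- A map with the left lifting property against all fibrations is a trivial cofibration. -/
lemma ModelStructure.trivCof_of_llp (M : ModelStructure) {A B : SSet.{0}} (f : A ⟶ B)
    (h : ∀ ⦃X Y : SSet.{0}⦄ (p : X ⟶ Y), M.fib p → HasLiftingProperty f p) :
    M.cof f ∧ M.weq f := by
  obtain ⟨Z, i, p, hic, hiw, hpf, hip⟩ := M.factor_trivCof_fib f
  haveI := h p hpf
  have sq : CommSq i f p (𝟙 B) := ⟨by simp [hip]⟩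
  refine ⟨M.cof_retract f i (Arrow.homMk (u := 𝟙 A) (v := sq.lift) (by simp))
      (Arrow.homMk (u := 𝟙 A) (v := p) (by simp [hip])) ?_ hic,
    M.weq_retract f i (Arrow.homMk (u := 𝟙 A) (v := sq.lift) (by simp))
      (Arrow.homMk (u := 𝟙 A) (v := p) (by simp [hip])) ?_ hiw⟩ <;>
  · ext
    · simp
    · simp [sq.fac_right]

/-- A map with the right lifting property against all monomorphisms is a trivial fibration
(given that the cofibrations are the monomorphisms). -/
lemma ModelStructure.trivFib_of_rlp (M : ModelStructure)
    (hcof : M.cof = MorphismProperty.monomorphisms SSet.{0}) {X Y : SSet.{0}} (p : X ⟶ Y)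
    (h : ∀ ⦃A B : SSet.{0}⦄ (i : A ⟶ B), Mono i → HasLiftingProperty i p) :
    M.fib p ∧ M.weq p := by
  obtain ⟨Z, i, q, hic, hqf, hqw, hiq⟩ := M.factor_cof_trivFib p
  haveI := h i (by rw [hcof] at hic; exact hic)
  have sq : CommSq (𝟙 X) i p q := ⟨by simp [hiq]⟩
  refine ⟨M.fib_retract p q (Arrow.homMk (u := i) (v := 𝟙 Y) (by simp [hiq]))
      (Arrow.homMk (u := sq.lift) (v := 𝟙 Y) (by simp [sq.fac_right])) ?_ hqf,
    M.weq_retract p q (Arrow.homMk (u := i) (v := 𝟙 Y) (by simp [hiq]))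
      (Arrow.homMk (u := sq.lift) (v := 𝟙 Y) (by simp [sq.fac_right])) ?_ hqw⟩ <;>
  · ext
    · simp [sq.fac_left]
    · simp

/-- Levelwise injective maps of simplicial sets are monomorphisms. -/
lemma mono_of_injective_app {X Y : SSet.{0}} (f : X ⟶ Y)
    (h : ∀ m, Function.Injective (f.app m)) : Mono f :=
  (NatTrans.mono_iff_mono_app' (C := SimplexCategoryᵒᵖ) (D := Type 0) f).2
    fun m => (mono_iff_injective _).2 (h m)

/-- Monomorphisms of simplicial sets are levelwise injective. -/
lemma injective_app_of_mono {X Y : SSet.{0}} (f : X ⟶ Y) [Mono f]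
    (m : SimplexCategoryᵒᵖ) : Function.Injective (f.app m) :=
  (mono_iff_injective _).1
    ((NatTrans.mono_iff_mono_app' (C := SimplexCategoryᵒᵖ) (D := Type 0) f).1 inferInstance m)

instance (m : SimplexCategoryᵒᵖ) : Subsingleton (Δ[0].obj m) :=
  ⟨fun a b => by
    apply SSet.stdSimplex.objEquiv.injective
    apply SimplexCategory.Hom.ext
    apply OrderHom.ext
    funext j
    exact Subsingleton.elim (α := Fin 1) _ _⟩

/-- The first projection of a product. -/
def fstMap (X Y : SSet.{0}) : sprod X Y ⟶ X where
  app _ := TypeCat.ofHom (fun (p : X.obj _ × Y.obj _) => p.1)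
  naturality _ _ _ := rfl

/-- The second projection of a product. -/
def sndMap (X Y : SSet.{0}) : sprod X Y ⟶ Y where
  app _ := TypeCat.ofHom (fun (p : X.obj _ × Y.obj _) => p.2)
  naturality _ _ _ := rfl

/-- The map `B ⟶ J` determined by a `Bool`-valued function on the vertices of `B`. -/
def vmap {B : SSet.{0}} (φ : B.obj V0 → Bool) : B ⟶ J where
  app m := TypeCat.ofHom (fun σ => fun i => φ (B.map (SimplexCategory.const (SimplexCategory.mk 0) m.unop i).op σ))
  naturality m m' f := by
    ext σ
    funext i
    have hmor : f ≫ (SimplexCategory.const (SimplexCategory.mk 0) m'.unop i).op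
        = (SimplexCategory.const (SimplexCategory.mk 0) m.unop (f.unop.toOrderHom i)).op :=
      Quiver.Hom.unop_inj (SimplexCategory.const_comp _ f.unop i)
    show φ (B.map (SimplexCategory.const (SimplexCategory.mk 0) m'.unop i).op (B.map f σ))
      = φ (B.map (SimplexCategory.const (SimplexCategory.mk 0) m.unop
          (f.unop.toOrderHom i)).op σ)
    rw [← FunctorToTypes.map_comp_apply, hmor]

lemma vmap_comp {A B : SSet.{0}} (m : A ⟶ B) (t : A ⟶ J) (φ : B.obj V0 → Bool)
    (hφ : ∀ a : A.obj V0, φ (m.app V0 a) = t.app V0 a 0) : m ≫ vmap φ = t := by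
  ext k a
  funext i
  show φ (B.map (SimplexCategory.const (SimplexCategory.mk 0) k.unop i).op (m.app k a))
    = t.app k a i
  rw [← FunctorToTypes.naturality, hφ, FunctorToTypes.naturality]
  rfl

/-- Extending maps to `J` along monomorphisms. -/
lemma exists_extension_J {A B : SSet.{0}} (m : A ⟶ B) [Mono m] (t : A ⟶ J) :
    ∃ j : B ⟶ J, m ≫ j = t := by
  classical
  refine ⟨vmap (fun v => if h : ∃ a, m.app V0 a = v then t.app V0 h.choose 0 else false),
    vmap_comp m t _ fun a => ?_⟩
  have h : ∃ a', m.app V0 a' = m.app V0 a := ⟨a, rfl⟩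
  rw [dif_pos h]
  exact congrArg (fun x => t.app V0 x 0) (injective_app_of_mono m V0 h.choose_spec)

/-- The second projection `J × Z ⟶ Z` has the RLP against all monomorphisms. -/
lemma hlp_snd {A B Z : SSet.{0}} (i : A ⟶ B) [Mono i] : HasLiftingProperty i (sndMap J Z) := by
  constructor
  intro f g sq
  obtain ⟨j, hj⟩ := exists_extension_J i (f ≫ fstMap J Z)
  refine CommSq.HasLift.mk' ⟨?_, ?_, ?_⟩
  · exact { app := fun m => TypeCat.ofHom (fun b => (j.app m b, g.app m b))
            naturality := fun m m' φ => by
              ext b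
              refine Prod.ext ?_ ?_
              · exact NatTrans.naturality_apply j φ b
              · exact NatTrans.naturality_apply g φ b }
  · ext m a
    refine Prod.ext ?_ ?_
    · exact ConcreteCategory.congr_hom (congr_app hj m) a
    · exact (ConcreteCategory.congr_hom (congr_app sq.w m) a).symm
  · ext m b
    rfl

/-- The second projection `Δ[0] × Z ≅ Z`. -/
def sndIso (Z : SSet.{0}) : sprod Δ[0] Z ≅ Z where
  hom := sndMap Δ[0] Z
  inv :=
    { app := fun m => TypeCat.ofHom (fun z => (SSet.stdSimplex.const 0 0 m, z))
      naturality := fun m m' φ => by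
        ext z
        exact Prod.ext (Subsingleton.elim _ _) rfl }
  hom_inv_id := by
    ext m p
    exact Prod.ext (Subsingleton.elim _ _) rfl
  inv_hom_id := by
    ext m z
    rfl

lemma slice_comp_snd (Z : SSet.{0}) :
    sprodMap (ptJ false) (𝟙 Z) ≫ sndMap J Z = sndMap Δ[0] Z := rfl

/-- The inclusion `{0} × Z ⟶ J × Z` is a weak equivalence. -/
lemma ModelStructure.weq_slice (M : ModelStructure)
    (hcof : M.cof = MorphismProperty.monomorphisms SSet.{0}) (Z : SSet.{0}) :
    M.weq (sprodMap (ptJ false) (𝟙 Z)) := by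
  have hsnd : M.fib (sndMap J Z) ∧ M.weq (sndMap J Z) :=
    M.trivFib_of_rlp hcof _ (fun A B i hi => by haveI := hi; exact hlp_snd i)
  refine M.weq_of_comp_right _ (sndMap J Z) hsnd.2 ?_
  rw [slice_comp_snd]
  haveI : IsIso (sndMap Δ[0] Z) := ⟨(sndIso Z).inv, (sndIso Z).hom_inv_id, (sndIso Z).inv_hom_id⟩
  exact M.weq_of_iso _

lemma mono_slice (W : SSet.{0}) : Mono (sprodMap (ptJ false) (𝟙 W)) := by
  apply mono_of_injective_app
  intro m p q h
  have h2 := congrArg Prod.snd h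
  exact Prod.ext (Subsingleton.elim _ _) h2

/-- The inclusion `{0} × Z ⟶ J × Z` is a trivial cofibration. -/
lemma ModelStructure.trivCof_slice (M : ModelStructure)
    (hcof : M.cof = MorphismProperty.monomorphisms SSet.{0}) (Z : SSet.{0}) :
    M.cof (sprodMap (ptJ false) (𝟙 Z)) ∧ M.weq (sprodMap (ptJ false) (𝟙 Z)) :=
  ⟨by rw [hcof]; exact mono_slice Z, M.weq_slice hcof Z⟩

/-- The left pushout inclusion has the LLP against any map that the right leg lifts against. -/
lemma hlp_inl {W Z X Y : SSet.{0}} (g : W ⟶ Z) (p : X ⟶ Y)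
    (hg : HasLiftingProperty (sprodMap (ptJ false) (𝟙 W)) p) :
    HasLiftingProperty
      (pushout.inl (sprodMap (𝟙 Δ[0]) g) (sprodMap (ptJ false) (𝟙 W))) p := by
  constructor
  intro t b sq
  have sq2 : CommSq (sprodMap (𝟙 Δ[0]) g ≫ t) (sprodMap (ptJ false) (𝟙 W)) p
      (pushout.inr _ _ ≫ b) := ⟨by
    rw [Category.assoc, sq.w, ← Category.assoc, ← Category.assoc, pushout.condition]⟩
  haveI := hg
  refine CommSq.HasLift.mk' ⟨pushout.desc t sq2.lift sq2.fac_left.symm, ?_, ?_⟩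
  · exact pushout.inl_desc _ _ _
  · apply pushout.hom_ext
    · rw [pushout.inl_desc_assoc, sq.w]
    · rw [pushout.inr_desc_assoc, sq2.fac_right]

/-- The left pushout inclusion is a trivial cofibration. -/
lemma ModelStructure.trivCof_inl (M : ModelStructure)
    (hcof : M.cof = MorphismProperty.monomorphisms SSet.{0}) {W Z : SSet.{0}} (g : W ⟶ Z) :
    M.cof (pushout.inl (sprodMap (𝟙 Δ[0]) g) (sprodMap (ptJ false) (𝟙 W))) ∧
      M.weq (pushout.inl (sprodMap (𝟙 Δ[0]) g) (sprodMap (ptJ false) (𝟙 W))) := by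
  apply M.trivCof_of_llp
  intro X Y p hp
  exact hlp_inl g p (M.lift_trivCof_fib _ p (M.trivCof_slice hcof W).1 (M.trivCof_slice hcof W).2 hp)

/-- Elements of a pushout of simplicial sets, at each level, come from one of the two legs. -/
lemma pushout_jointly_surjective {A B C : SSet.{0}} (f : A ⟶ B) (g : A ⟶ C)
    (m : SimplexCategoryᵒᵖ) (x : (pushout f g).obj m) :
    (∃ y, (pushout.inl f g).app m y = x) ∨ (∃ y, (pushout.inr f g).app m y = x) := by
  have hc := isColimitOfPreserves ((evaluation SimplexCategoryᵒᵖ (Type 0)).obj m)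
    (colimit.isColimit (span f g))
  obtain ⟨j, y, hy⟩ := Types.jointly_surjective_of_isColimit hc x
  match j with
  | WalkingSpan.left => exact Or.inl ⟨y, hy⟩
  | WalkingSpan.right => exact Or.inr ⟨y, hy⟩
  | WalkingSpan.zero =>
    refine Or.inl ⟨f.app m y, ?_⟩
    rw [← hy]
    have hw := ConcreteCategory.congr_hom (congr_app (colimit.w (span f g) WalkingSpan.Hom.fst) m) y
    exact hw

/-- The pushout-product `({0} ↪ J) □ g` is a monomorphism whenever `g` is. -/
lemma mono_pp {W Z : SSet.{0}} (g : W ⟶ Z) [Mono g] : Mono (pp (ptJ false) g) := by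
  apply mono_of_injective_app
  intro m x x' h
  have hinl : ∀ y, (pp (ptJ false) g).app m
      ((pushout.inl (sprodMap (𝟙 Δ[0]) g) (sprodMap (ptJ false) (𝟙 W))).app m y) =
      (sprodMap (ptJ false) (𝟙 Z)).app m y := fun y =>
    ConcreteCategory.congr_hom (congr_app (pushout.inl_desc (f := sprodMap (𝟙 Δ[0]) g)
      (g := sprodMap (ptJ false) (𝟙 W)) (sprodMap (ptJ false) (𝟙 Z)) (sprodMap (𝟙 J) g)
      rfl) m) y
  have hinr : ∀ y, (pp (ptJ false) g).app m
      ((pushout.inr (sprodMap (𝟙 Δ[0]) g) (sprodMap (ptJ false) (𝟙 W))).app m y) =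
      (sprodMap (𝟙 J) g).app m y := fun y =>
    ConcreteCategory.congr_hom (congr_app (pushout.inr_desc (f := sprodMap (𝟙 Δ[0]) g)
      (g := sprodMap (ptJ false) (𝟙 W)) (sprodMap (ptJ false) (𝟙 Z)) (sprodMap (𝟙 J) g)
      rfl) m) y
  have hcond : ∀ y, (pushout.inl (sprodMap (𝟙 Δ[0]) g) (sprodMap (ptJ false) (𝟙 W))).app m
      ((sprodMap (𝟙 Δ[0]) g).app m y) =
      (pushout.inr (sprodMap (𝟙 Δ[0]) g) (sprodMap (ptJ false) (𝟙 W))).app m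
      ((sprodMap (ptJ false) (𝟙 W)).app m y) := fun y =>
    ConcreteCategory.congr_hom (congr_app (pushout.condition (f := sprodMap (𝟙 Δ[0]) g)
      (g := sprodMap (ptJ false) (𝟙 W))) m) y
  rcases pushout_jointly_surjective _ _ m x with ⟨y, rfl⟩ | ⟨y, rfl⟩ <;>
    rcases pushout_jointly_surjective _ _ m x' with ⟨y', rfl⟩ | ⟨y', rfl⟩
  · rw [hinl, hinl] at h
    have h2' := congrArg Prod.snd h
    have h2 : y.2 = y'.2 := h2'
    exact congrArg _ (Prod.ext (Subsingleton.elim _ _) h2)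
  · rw [hinl, hinr] at h
    obtain ⟨p, z⟩ := y
    obtain ⟨a, w⟩ := y'
    have hz : z = g.app m w := congrArg Prod.snd h
    have ha : (fun _ => false : J.obj m) = a := congrArg Prod.fst h
    have : ((p, z) : (sprod Δ[0] Z).obj m) = (sprodMap (𝟙 Δ[0]) g).app m (p, w) :=
      Prod.ext (Subsingleton.elim _ _) hz
    rw [this]
    exact (hcond (p, w)).trans (congrArg _ (Prod.ext ha rfl))
  · rw [hinr, hinl] at h
    obtain ⟨a, w⟩ := y
    obtain ⟨p, z⟩ := y'
    have hz : z = g.app m w := (congrArg Prod.snd h).symm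
    have ha : (fun _ => false : J.obj m) = a := (congrArg Prod.fst h).symm
    have : ((p, z) : (sprod Δ[0] Z).obj m) = (sprodMap (𝟙 Δ[0]) g).app m (p, w) :=
      Prod.ext (Subsingleton.elim _ _) hz
    rw [this]
    refine Eq.symm ((hcond (p, w)).trans ?_)
    exact congrArg _ (Prod.ext ha rfl)
  · rw [hinr, hinr] at h
    have h1' := congrArg Prod.fst h
    have h2' := congrArg Prod.snd h
    have h1 : y.1 = y'.1 := h1'
    have h2 : g.app m y.2 = g.app m y'.2 := h2'
    exact congrArg _ (Prod.ext h1 (injective_app_of_mono g m h2))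

end Aux

/-- In any model structure on `SSet` whose cofibrations are exactly the
monomorphisms, the pushout-products `({0} ↪ J) □ (∂Δ[n] ↪ Δ[n])` are trivial
cofibrations. -/
theorem pp_ptJ_boundaryInclusion_trivialCofibration (M : ModelStructure)
    (hcof : M.cof = MorphismProperty.monomorphisms SSet.{0}) (n : ℕ) :
    M.cof (pp (ptJ false) ((SSet.boundary.{0} n).ι)) ∧
      M.weq (pp (ptJ false) ((SSet.boundary.{0} n).ι)) := by
  haveI : Mono ((SSet.boundary.{0} n).ι) :=
    mono_of_injective_app _ (fun m a b h => Subtype.ext h)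
  constructor
  · rw [hcof]
    exact mono_pp ((SSet.boundary.{0} n).ι)
  · refine M.weq_of_comp_left
      (pushout.inl (sprodMap (𝟙 Δ[0]) ((SSet.boundary.{0} n).ι))
        (sprodMap (ptJ false) (𝟙 (∂Δ[n] : SSet.{0}))))
      (pp (ptJ false) ((SSet.boundary.{0} n).ι))
      (M.trivCof_inl hcof ((SSet.boundary.{0} n).ι)).2 ?_
    rw [show pushout.inl _ _ ≫ pp (ptJ false) ((SSet.boundary.{0} n).ι) =
        sprodMap (ptJ false) (𝟙 Δ[n]) from pushout.inl_desc _ _ _]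
    exact M.weq_slice hcof Δ[n]

end Paper
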